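/- Let T be a balanced AND-OR tree and let d be an independent distribution on T under which the probability of the root having value 0 is either 0 or 1. Then there exists a depth-first directional algorithm B₀ with cost(B₀,d) = min over all algorithms A of cost(A,d). -/

import Mathlib

open scoped BigOperators

/-! ## A framework for balanced AND-OR trees, algorithms and costs

A balanced tree of height `n` with branching factors `b 0, b 1, ...` (by depth):
a leaf is a path, i.e. an element of `∀ i : Fin n, Fin (b i)`; an internal node
is identified with its path, a list of child indices of length `< n`.
`rootAnd = true` means nodes at even depth are AND gates (an AND-OR tree);
`rootAnd = false` means the root is an OR gate (an OR-AND tree).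
Boolean `true` stands for the value 1 and `false` for the value 0. -/

/-- Leaves of the balanced tree of height `n` with branching factors `b`. -/
abbrev Leaf (n : ℕ) (b : ℕ → ℕ) : Type := ∀ i : Fin n, Fin (b i)

/-- The path (list of child indices) of a leaf. -/
def Leaf.toList {n : ℕ} {b : ℕ → ℕ} (l : Leaf n b) : List ℕ :=
  List.ofFn fun i => (l i : ℕ)

/-- Leaf `l` lies below the node with path `u` (i.e. `u` is an ancestor-or-self of `l`). -/
def Below {n : ℕ} {b : ℕ → ℕ} (u : List ℕ) (l : Leaf n b) : Prop :=
  u <+: l.toList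

/-- Value, under the assignment `v` to the leaves, of the node with path `u`,
where `fuel` is the remaining height below `u`. -/
def evalAux (rootAnd : Bool) {n : ℕ} {b : ℕ → ℕ} (v : Leaf n b → Bool) :
    ℕ → List ℕ → Bool
  | 0, u => decide (∀ l : Leaf n b, Leaf.toList l = u → v l = true)
  | fuel+1, u =>
      if (u.length % 2 == 0) == rootAnd then
        decide (∀ j, j < b u.length → evalAux rootAnd v fuel (u ++ [j]) = true)
      else
        decide (∃ j, j < b u.length ∧ evalAux rootAnd v fuel (u ++ [j]) = true)

/-- Value of the node with path `u` in the height-`n` tree. -/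
def nodeVal (rootAnd : Bool) (n : ℕ) (b : ℕ → ℕ) (v : Leaf n b → Bool) (u : List ℕ) : Bool :=
  evalAux rootAnd v (n - u.length) u

/-- Value of the root of the tree. -/
def rootVal (rootAnd : Bool) (n : ℕ) (b : ℕ → ℕ) (v : Leaf n b → Bool) : Bool :=
  nodeVal rootAnd n b v []

/-- Deterministic leaf-querying algorithms (decision trees): either announce the
result, or query a leaf and continue depending on the answer. -/
inductive Alg (L : Type) : Type
  | result : Bool → Alg L
  | query : L → (Bool → Alg L) → Alg L

/-- The sequence of leaves queried by `A` on the assignment `v`, in order. -/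
def Alg.run {L : Type} : Alg L → (L → Bool) → List L
  | .result _, _ => []
  | .query l next, v => l :: (next (v l)).run v

/-- The output of `A` on the assignment `v`. -/
def Alg.output {L : Type} : Alg L → (L → Bool) → Bool
  | .result c, _ => c
  | .query l next, v => (next (v l)).output v

/-- `A` is an algorithm for the tree: it queries each leaf at most once and, for every
Boolean assignment to the leaves, it determines (outputs) the value of the root. -/
def IsAlg (rootAnd : Bool) (n : ℕ) (b : ℕ → ℕ) (A : Alg (Leaf n b)) : Prop :=
  (∀ v, (A.run v).Nodup) ∧ (∀ v, A.output v = rootVal rootAnd n b v)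

/-- An independent distribution: each leaf `l` independently has value 0
with probability `d l`. -/
def IsID {n : ℕ} {b : ℕ → ℕ} (d : Leaf n b → ℝ) : Prop := ∀ l, 0 ≤ d l ∧ d l ≤ 1

/-- An independent and identical distribution: an ID with all leaf probabilities equal. -/
def IsIID {n : ℕ} {b : ℕ → ℕ} (d : Leaf n b → ℝ) : Prop :=
  IsID d ∧ ∀ l l', d l = d l'

/-- Probability of the full assignment `v` under the independent distribution `d`. -/
noncomputable def assgProb {n : ℕ} {b : ℕ → ℕ} (d : Leaf n b → ℝ) (v : Leaf n b → Bool) : ℝ :=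
  ∏ l : Leaf n b, if v l then 1 - d l else d l

/-- Expected number of leaf queries of `A` under the independent distribution `d`. -/
noncomputable def cost {n : ℕ} {b : ℕ → ℕ} (A : Alg (Leaf n b)) (d : Leaf n b → ℝ) : ℝ :=
  ∑ v : Leaf n b → Bool, assgProb d v * ((A.run v).length : ℝ)

/-- Probability, under `d`, that the root has value 0. -/
noncomputable def rootZeroProb (rootAnd : Bool) (n : ℕ) (b : ℕ → ℕ) (d : Leaf n b → ℝ) : ℝ :=
  ∑ v : Leaf n b → Bool, if rootVal rootAnd n b v = false then assgProb d v else 0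

/-- The value of the node with path `u` is determined by the answers (recorded in `v`)
to the queries listed in `S`: all assignments consistent with these answers give the
node the same value. -/
def Determines (rootAnd : Bool) (n : ℕ) (b : ℕ → ℕ) (S : List (Leaf n b))
    (v : Leaf n b → Bool) (u : List ℕ) : Prop :=
  ∃ c : Bool, ∀ w : Leaf n b → Bool, (∀ l ∈ S, w l = v l) → nodeVal rootAnd n b w u = c

/-- `A` is depth-first: for every internal node `u`, once `A` queries a leaf below `u`,
it does not query any leaf not below `u` until the value of `u` is determined by the
answers received. -/
def DepthFirst (rootAnd : Bool) (n : ℕ) (b : ℕ → ℕ) (A : Alg (Leaf n b)) : Prop :=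
  ∀ v : Leaf n b → Bool, ∀ u : List ℕ, u.length < n →
    ∀ i j : ℕ, ∀ hij : i < j, ∀ hj : j < (A.run v).length,
      Below u ((A.run v)[i]'(hij.trans hj)) → ¬ Below u ((A.run v)[j]'hj) →
      Determines rootAnd n b ((A.run v).take j) v u

/-- `A` is directional: there is a fixed linear order (an injective ranking) of the
leaves such that on every assignment `A` queries leaves in increasing order. -/
def Directional {n : ℕ} {b : ℕ → ℕ} (A : Alg (Leaf n b)) : Prop :=
  ∃ rank : Leaf n b → ℕ, Function.Injective rank ∧
    ∀ v, ((A.run v).map rank).Pairwise (· < ·)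

/-- The minimum of `cost (A, d)` over all algorithms `A` for the tree. -/
noncomputable def minCost (rootAnd : Bool) (n : ℕ) (b : ℕ → ℕ) (d : Leaf n b → ℝ) : ℝ :=
  sInf {c : ℝ | ∃ A : Alg (Leaf n b), IsAlg rootAnd n b A ∧ c = cost A d}

/-- The minimum of `cost (A, d)` over all depth-first algorithms `A` for the tree. -/
noncomputable def minCostDF (rootAnd : Bool) (n : ℕ) (b : ℕ → ℕ) (d : Leaf n b → ℝ) : ℝ :=
  sInf {c : ℝ | ∃ A : Alg (Leaf n b),
    IsAlg rootAnd n b A ∧ DepthFirst rootAnd n b A ∧ c = cost A d}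

namespace BDO

variable {n : ℕ} {b : ℕ → ℕ}

/-- validity of a path: all entries are legal child indices -/
def Valid (b : ℕ → ℕ) (u : List ℕ) : Prop := ∀ i (h : i < u.length), u[i] < b i

lemma toList_length (l : Leaf n b) : l.toList.length = n := by
  simp [Leaf.toList]

lemma toList_get (l : Leaf n b) (i : Fin n) :
    l.toList[(i : ℕ)]'(by simp [Leaf.toList]) = l i := by
  simp [Leaf.toList]

lemma toList_inj {l l' : Leaf n b} (h : l.toList = l'.toList) : l = l' := by
  funext i
  have := congrArg (fun s : List ℕ => s.getD i 0) h
  simp [Leaf.toList, List.getD_eq_getElem?_getD, List.getElem?_ofFn] at this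
  exact Fin.ext (by simpa [dif_pos i.isLt] using this)

/-- the unique leaf with a given (valid, full-length) path -/
def leafOf (hbp : ∀ i : Fin n, 0 < b i) (u : List ℕ) : Leaf n b :=
  fun i => ⟨u.getD i 0 % b i, Nat.mod_lt _ (hbp i)⟩

lemma toList_leafOf (hbp : ∀ i : Fin n, 0 < b i) {u : List ℕ}
    (hu : Valid b u) (hlen : u.length = n) : (leafOf hbp u).toList = u := by
  apply List.ext_getElem (by simp [Leaf.toList, hlen])
  intro i h1 h2
  have hin : i < n := by simpa [Leaf.toList] using h1
  simp [Leaf.toList, leafOf, List.getD_eq_getElem?_getD, List.getElem?_eq_getElem h2,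
    Nat.mod_eq_of_lt (hu i h2)]

lemma below_of_toList_eq {u : List ℕ} {l : Leaf n b} (h : l.toList = u) : Below u l := by
  rw [Below, h]

lemma Below.of_append {u s : List ℕ} {l : Leaf n b} (h : Below (u ++ s) l) : Below u l :=
  (u.prefix_append s).trans h

lemma eq_leafOf_of_toList_eq (hbp : ∀ i : Fin n, 0 < b i) {u : List ℕ} {l : Leaf n b}
    (hu : Valid b u) (hlen : u.length = n) (h : l.toList = u) : l = leafOf hbp u :=
  toList_inj (by rw [h, toList_leafOf hbp hu hlen])

lemma evalAux_zero (hbp : ∀ i : Fin n, 0 < b i) {u : List ℕ}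
    (hu : Valid b u) (hlen : u.length = n) (v : Leaf n b → Bool) :
    evalAux true v 0 u = v (leafOf hbp u) := by
  rw [evalAux]
  cases hv : v (leafOf hbp u) with
  | true =>
    simp only [decide_eq_true_eq]
    intro l hl
    rw [eq_leafOf_of_toList_eq hbp hu hlen hl, hv]
  | false =>
    simp only [decide_eq_false_iff_not]
    intro hall
    exact absurd (hall _ (toList_leafOf hbp hu hlen)) (by simp [hv])

lemma evalAux_congr {v w : Leaf n b → Bool} :
    ∀ (fuel : ℕ) (u : List ℕ), (∀ l, Below u l → w l = v l) →
      evalAux true w fuel u = evalAux true v fuel u := by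
  intro fuel
  induction fuel with
  | zero =>
    intro u h
    rw [evalAux, evalAux]
    congr 1
    apply propext
    constructor <;> intro hall l hl
    · rw [← h l (below_of_toList_eq hl)]; exact hall l hl
    · rw [h l (below_of_toList_eq hl)]; exact hall l hl
  | succ fuel ih =>
    intro u h
    rw [evalAux, evalAux]
    have hch : ∀ j, evalAux true w fuel (u ++ [j]) = evalAux true v fuel (u ++ [j]) :=
      fun j => ih (u ++ [j]) (fun l hl => h l (Below.of_append hl))
    simp only [hch]

end BDO
namespace BDO

variable {n : ℕ} {b : ℕ → ℕ}

/-- an assignment with nonzero probability under `d` -/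
def Possible (d : Leaf n b → ℝ) (v : Leaf n b → Bool) : Prop :=
  ∀ l, (v l = true → d l ≠ 1) ∧ (v l = false → d l ≠ 0)

lemma assgProb_nonneg {d : Leaf n b → ℝ} (hID : IsID d) (v : Leaf n b → Bool) :
    0 ≤ assgProb d v := by
  apply Finset.prod_nonneg
  intro l _
  rcases hID l with ⟨h0, h1⟩
  cases hv : v l <;> simp [hv] <;> linarith

lemma assgProb_pos {d : Leaf n b → ℝ} (hID : IsID d) {v : Leaf n b → Bool}
    (hv : Possible d v) : 0 < assgProb d v := by
  apply Finset.prod_pos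
  intro l _
  rcases hID l with ⟨h0, h1⟩
  rcases hv l with ⟨hp1, hp0⟩
  cases hvl : v l <;> simp [hvl]
  · exact lt_of_le_of_ne h0 (Ne.symm (hp0 hvl))
  · have := hp1 hvl
    cases lt_or_eq_of_le h1 with
    | inl h => linarith
    | inr h => exact absurd h this

lemma possible_of_ne_zero {d : Leaf n b → ℝ} {v : Leaf n b → Bool}
    (h : assgProb d v ≠ 0) : Possible d v := by
  intro l
  constructor <;> intro hvl heq <;> apply h <;>
    exact Finset.prod_eq_zero (Finset.mem_univ l) (by simp [hvl, heq])

lemma sum_assgProb (d : Leaf n b → ℝ) :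
    ∑ v : Leaf n b → Bool, assgProb d v = 1 := by
  classical
  have h := Finset.prod_univ_sum (fun _ : Leaf n b => (Finset.univ : Finset Bool))
    (fun l c => if c then 1 - d l else d l)
  rw [Fintype.piFinset_univ] at h
  have h2 : ∀ l : Leaf n b, (∑ c : Bool, if c then 1 - d l else d l) = 1 := by
    intro l; simp
  simp only [h2, Finset.prod_const_one] at h
  exact h.symm

lemma root_const {d : Leaf n b → ℝ} (hID : IsID d)
    (hroot : rootZeroProb true n b d = 0 ∨ rootZeroProb true n b d = 1) :
    ∃ t : Bool, ∀ v : Leaf n b → Bool, Possible d v → rootVal true n b v = t := by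
  rcases hroot with h | h
  · refine ⟨true, fun v hv => ?_⟩
    by_contra hne
    have hfalse : rootVal true n b v = false := by
      cases hrv : rootVal true n b v
      · rfl
      · exact absurd hrv hne
    have hz : ∀ w ∈ (Finset.univ : Finset (Leaf n b → Bool)),
        (if rootVal true n b w = false then assgProb d w else 0) = 0 := by
      rw [← Finset.sum_eq_zero_iff_of_nonneg]
      · exact h
      · intro w _
        split
        · exact assgProb_nonneg hID w
        · exact le_refl 0
    have := hz v (Finset.mem_univ v)
    rw [if_pos hfalse] at this
    exact absurd this (ne_of_gt (assgProb_pos hID hv))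
  · refine ⟨false, fun v hv => ?_⟩
    by_contra hne
    have htrue : rootVal true n b v = true := by
      cases hrv : rootVal true n b v
      · exact absurd hrv hne
      · rfl
    have hsum : ∑ w : Leaf n b → Bool,
        (assgProb d w - if rootVal true n b w = false then assgProb d w else 0) = 0 := by
      rw [Finset.sum_sub_distrib, sum_assgProb]
      have hrz : (∑ w : Leaf n b → Bool,
          if rootVal true n b w = false then assgProb d w else 0)
          = rootZeroProb true n b d := rfl
      rw [hrz, h, sub_self]
    have hz : ∀ w ∈ (Finset.univ : Finset (Leaf n b → Bool)),
        (assgProb d w - if rootVal true n b w = false then assgProb d w else 0) = 0 := by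
      rw [← Finset.sum_eq_zero_iff_of_nonneg]
      · exact hsum
      · intro w _
        split
        · simp
        · simpa using assgProb_nonneg hID w
    have := hz v (Finset.mem_univ v)
    rw [if_neg (by simp [htrue]), sub_zero] at this
    exact absurd this (ne_of_gt (assgProb_pos hID hv))

end BDO
namespace BDO

variable {n : ℕ} {b : ℕ → ℕ}

instance decBelow (u : List ℕ) (l : Leaf n b) : Decidable (Below u l) :=
  inferInstanceAs (Decidable (u <+: l.toList))

lemma bool_ne {x y : Bool} (h : x ≠ y) : x = !y := by
  cases x <;> cases y <;> simp_all

/-- minimal size of a certificate for value `t`, at remaining height `fuel`, depth `k` -/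
def cSize (b : ℕ → ℕ) (t : Bool) : ℕ → ℕ → ℕ
  | 0, _ => 1
  | fuel+1, k => if (k % 2 == 0) == t then b k * cSize b t fuel (k+1) else cSize b t fuel (k+1)

lemma Valid.append {u : List ℕ} (hu : Valid b u) {j : ℕ} (hj : j < b u.length) :
    Valid b (u ++ [j]) := by
  intro i h
  by_cases hi : i < u.length
  · rw [List.getElem_append_left hi]
    exact hu i hi
  · have hieq : i = u.length := by
      simp only [List.length_append, List.length_singleton] at h
      omega
    subst hieq
    simpa using hj

lemma below_disj {u : List ℕ} {j j' : ℕ} {l : Leaf n b}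
    (h1 : Below (u ++ [j]) l) (h2 : Below (u ++ [j']) l) : j = j' := by
  have h3 := List.prefix_of_prefix_length_le h1 h2 (by simp)
  have heq : u ++ [j] = u ++ [j'] := h3.eq_of_length (by simp)
  simpa using heq

lemma countP_disjoint_sum {α : Type*} (S : List α) (m : ℕ) (P : α → Bool) (Q : ℕ → α → Bool)
    (hPQ : ∀ j, j < m → ∀ a, Q j a = true → P a = true)
    (hdisj : ∀ j j' a, j < m → j' < m → Q j a = true → Q j' a = true → j = j') :
    ∑ j ∈ Finset.range m, S.countP (Q j) ≤ S.countP P := by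
  induction S with
  | nil => simp
  | cons a S ih =>
    simp only [List.countP_cons]
    rw [Finset.sum_add_distrib]
    have hstep : (∑ j ∈ Finset.range m, if Q j a then 1 else 0) ≤ (if P a then 1 else 0) := by
      by_cases hex : ∃ j₀, j₀ < m ∧ Q j₀ a = true
      · rcases hex with ⟨j₀, hj₀, hQ⟩
        rw [if_pos (hPQ j₀ hj₀ a hQ)]
        calc (∑ j ∈ Finset.range m, if Q j a then 1 else 0)
            ≤ ∑ j ∈ Finset.range m, if j = j₀ then 1 else 0 := by
              apply Finset.sum_le_sum
              intro j hj
              by_cases hQj : Q j a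
              · rw [if_pos hQj, if_pos (hdisj j j₀ a (Finset.mem_range.mp hj) hj₀ hQj hQ)]
              · simp [hQj]
          _ = 1 := by
              rw [Finset.sum_ite_eq' (Finset.range m) j₀ (fun _ => 1)]
              simp [Finset.mem_range.mpr hj₀]
      · push_neg at hex
        have : ∀ j ∈ Finset.range m, (if Q j a then 1 else 0) = 0 := by
          intro j hj
          simp [hex j (Finset.mem_range.mp hj)]
        rw [Finset.sum_congr rfl this]
        simp
    have := ih
    omega

/-- key lower bound: if the answers on `S` determine the value of node `u` to be `t`,
then `S` contains at least `cSize` leaves below `u`. -/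
lemma det_count (hbp : ∀ i : Fin n, 0 < b i) (t : Bool) (v : Leaf n b → Bool) :
    ∀ (fuel : ℕ) (u : List ℕ) (S : List (Leaf n b)), Valid b u → u.length + fuel = n →
    (∀ w : Leaf n b → Bool, (∀ l ∈ S, w l = v l) → evalAux true w fuel u = t) →
    cSize b t fuel u.length ≤ S.countP (fun l => decide (Below u l)) := by
  intro fuel
  induction fuel with
  | zero =>
    intro u S hu hlen H
    have hl₀mem : leafOf hbp u ∈ S := by
      by_contra hmem
      have h1 : evalAux true v 0 u = t := H v (fun l _ => rfl)
      have h2 : evalAux true (fun l => if l = leafOf hbp u then !(v (leafOf hbp u)) else v l)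
          0 u = t := by
        apply H
        intro l hl
        rw [if_neg]
        rintro rfl
        exact hmem hl
      rw [evalAux_zero hbp hu (by omega) v] at h1
      rw [evalAux_zero hbp hu (by omega) _] at h2
      simp only [if_pos rfl, h1] at h2
      simp at h2
    have : 0 < S.countP (fun l => decide (Below u l)) := by
      rw [List.countP_pos_iff]
      exact ⟨leafOf hbp u, hl₀mem, by
        simp only [decide_eq_true_eq]
        exact below_of_toList_eq (toList_leafOf hbp hu (by omega))⟩
    simpa [cSize] using this
  | succ fuel ih =>
    intro u S hu hlen H
    set k := u.length with hk
    by_cases hNA : (k % 2 == 0) = t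
    · -- "needs all" case : every child is determined to t
      have Hj : ∀ j, j < b k → ∀ w : Leaf n b → Bool, (∀ l ∈ S, w l = v l) →
          evalAux true w fuel (u ++ [j]) = t := by
        intro j hj w hw
        have hthis := H w hw
        rw [evalAux, hNA] at hthis
        cases t with
        | true =>
          rw [if_pos (show (true == true) = true from rfl)] at hthis
          simp only [decide_eq_true_eq] at hthis
          exact hthis j hj
        | false =>
          rw [if_neg (by simp)] at hthis
          simp only [decide_eq_false_iff_not, not_exists] at hthis
          have h2 := hthis j
          rw [Bool.eq_false_iff]
          intro he
          exact absurd ⟨hj, he⟩ h2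
      have hcount : ∀ j, j < b k →
          cSize b t fuel (k+1) ≤ S.countP (fun l => decide (Below (u ++ [j]) l)) := by
        intro j hj
        have := ih (u ++ [j]) S (hu.append hj) (by simp; omega) (Hj j hj)
        simpa using this
      have hsum : ∑ j ∈ Finset.range (b k), S.countP (fun l => decide (Below (u ++ [j]) l))
          ≤ S.countP (fun l => decide (Below u l)) := by
        apply countP_disjoint_sum
        · intro j hj l hQ
          simp only [decide_eq_true_eq] at hQ ⊢
          exact Below.of_append hQ
        · intro j j' l hj hj' hQ hQ'
          simp only [decide_eq_true_eq] at hQ hQ'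
          exact below_disj hQ hQ'
      have : b k * cSize b t fuel (k+1) ≤
          ∑ j ∈ Finset.range (b k), S.countP (fun l => decide (Below (u ++ [j]) l)) := by
        calc b k * cSize b t fuel (k+1)
            = ∑ _j ∈ Finset.range (b k), cSize b t fuel (k+1) := by
              rw [Finset.sum_const, Finset.card_range, smul_eq_mul]
          _ ≤ _ := Finset.sum_le_sum (fun j hj => hcount j (Finset.mem_range.mp hj))
      rw [cSize, if_pos (by simp [hNA])]
      omega
    · -- "needs one" case : some child is determined to t
      have hOr : (k % 2 == 0) = !t := by
        cases h : (k % 2 == 0) <;> cases t <;> simp_all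
      have Hex : ∃ j, j < b k ∧ ∀ w : Leaf n b → Bool, (∀ l ∈ S, w l = v l) →
          evalAux true w fuel (u ++ [j]) = t := by
        by_contra hne
        push_neg at hne
        have hne' : ∀ j, ∃ w : Leaf n b → Bool,
            (∀ l ∈ S, w l = v l) ∧ (j < b k → evalAux true w fuel (u ++ [j]) = !t) := by
          intro j
          by_cases hj : j < b k
          · rcases hne j hj with ⟨w, hw1, hw2⟩
            exact ⟨w, hw1, fun _ => bool_ne hw2⟩
          · exact ⟨v, fun l _ => rfl, fun h => absurd h hj⟩
        choose wf hwf1 hwf2 using hne'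
        classical
        have hWchild : ∀ j, j < b k →
            evalAux true (fun l => if Below u l then wf ((Leaf.toList l).getD k 0) l else v l)
              fuel (u ++ [j]) = !t := by
          intro j hj
          rw [← hwf2 j hj]
          apply evalAux_congr
          intro l hl
          have hidx : (Leaf.toList l).getD k 0 = j := by
            obtain ⟨s, hs⟩ := hl
            rw [← hs, List.append_assoc, List.singleton_append,
              List.getD_eq_getElem?_getD, List.getElem?_append_right (le_refl u.length)]
            simp
          rw [if_pos (Below.of_append hl), hidx]
        have hWS : ∀ l ∈ S,
            (fun l => if Below u l then wf ((Leaf.toList l).getD k 0) l else v l) l = v l := by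
          intro l hl
          by_cases hbel : Below u l
          · simp only [if_pos hbel]
            exact hwf1 _ l hl
          · simp only [if_neg hbel]
        have hHW := H _ hWS
        rw [evalAux, hOr] at hHW
        cases t with
        | true =>
          rw [if_neg (by simp)] at hHW
          simp only [decide_eq_true_eq] at hHW
          rcases hHW with ⟨j, hj, hval⟩
          rw [hWchild j hj] at hval
          simp at hval
        | false =>
          rw [if_pos (show ((!false) == true) = true from rfl)] at hHW
          simp only [decide_eq_false_iff_not, not_forall] at hHW
          rcases hHW with ⟨j, hj, hval⟩
          rw [hWchild j hj] at hval
          simp at hval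
      rcases Hex with ⟨j₀, hj₀, Hdet⟩
      have h1 := ih (u ++ [j₀]) S (hu.append hj₀) (by simp; omega) Hdet
      have h2 : S.countP (fun l => decide (Below (u ++ [j₀]) l)) ≤
          S.countP (fun l => decide (Below u l)) := by
        apply List.countP_mono_left
        intro l _ hl
        simp only [decide_eq_true_eq] at hl ⊢
        exact Below.of_append hl
      rw [cSize, if_neg (by simp [hNA])]
      simp only [List.length_append, List.length_singleton] at h1
      rw [← hk] at h1
      omega

end BDO
namespace BDO

variable {n : ℕ} {b : ℕ → ℕ}

/-- evaluate the children listed in `js`, short-circuiting -/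
def goNode {L : Type} (child : ℕ → (Bool → Alg L) → Alg L) (isAnd : Bool) :
    List ℕ → (Bool → Alg L) → Alg L
  | [], k => k isAnd
  | j :: js, k => child j (fun a => if a == isAnd then goNode child isAnd js k else k a)

/-- the depth-first solver: evaluate node `u` then continue with `k` -/
def evalA (hbp : ∀ i : Fin n, 0 < b i) (σ : List ℕ → List ℕ) :
    ℕ → List ℕ → (Bool → Alg (Leaf n b)) → Alg (Leaf n b)
  | 0, u, k => .query (leafOf hbp u) k
  | fuel+1, u, k =>
      goNode (fun j => evalA hbp σ fuel (u ++ [j])) (u.length % 2 == 0) (σ u) k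

/-- the value computed from the evaluated children -/
def goVal (vc : ℕ → Bool) (isAnd : Bool) : List ℕ → Bool
  | [] => isAnd
  | j :: js => if vc j == isAnd then goVal vc isAnd js else vc j

/-- the leaves queried while evaluating the children listed -/
def goProbe {L : Type} (pc : ℕ → List L) (vc : ℕ → Bool) (isAnd : Bool) : List ℕ → List L
  | [] => []
  | j :: js => pc j ++ (if vc j == isAnd then goProbe pc vc isAnd js else [])

/-- the leaves queried while evaluating node `u` under assignment `v` -/
def probeA (hbp : ∀ i : Fin n, 0 < b i) (σ : List ℕ → List ℕ) (v : Leaf n b → Bool) :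
    ℕ → List ℕ → List (Leaf n b)
  | 0, u => [leafOf hbp u]
  | fuel+1, u =>
      goProbe (fun j => probeA hbp σ v fuel (u ++ [j]))
        (fun j => evalAux true v fuel (u ++ [j])) (u.length % 2 == 0) (σ u)

lemma goVal_eval (vc : ℕ → Bool) (a : Bool) :
    ∀ js : List ℕ, goVal vc a js = (decide (∀ j ∈ js, vc j = a) == a) := by
  intro js
  induction js with
  | nil => simp [goVal]
  | cons j js ih =>
    rw [goVal]
    by_cases h : vc j = a
    · rw [if_pos (by simp [h]), ih]
      have : (∀ j' ∈ j :: js, vc j' = a) ↔ (∀ j' ∈ js, vc j' = a) := by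
        constructor
        · intro hh j' hj'
          exact hh j' (List.mem_cons_of_mem _ hj')
        · intro hh j' hj'
          rcases List.mem_cons.mp hj' with rfl | hj'
          · exact h
          · exact hh j' hj'
      rw [decide_eq_decide.mpr this]
    · rw [if_neg (by simp [h])]
      have : ¬ (∀ j' ∈ j :: js, vc j' = a) := fun hh => h (hh j (List.mem_cons_self))
      rw [decide_eq_false this]
      cases ha : a <;> cases hv : vc j <;> simp_all

lemma goVal_eq_evalAux {σ : List ℕ → List ℕ} {u : List ℕ}
    (hσu : ∀ j, j ∈ σ u ↔ j < b u.length) (v : Leaf n b → Bool) (fuel : ℕ) :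
    goVal (fun j => evalAux true v fuel (u ++ [j])) (u.length % 2 == 0) (σ u)
      = evalAux true v (fuel+1) u := by
  rw [goVal_eval, evalAux]
  cases h : (u.length % 2 == 0) with
  | true =>
    rw [if_pos (show (true == true) = true from rfl)]
    by_cases hall : ∀ j, j < b u.length → evalAux true v fuel (u ++ [j]) = true
    · rw [decide_eq_true hall,
        decide_eq_true (show ∀ j ∈ σ u, evalAux true v fuel (u ++ [j]) = true from
          fun j hj => hall j ((hσu j).mp hj))]
      rfl
    · rw [decide_eq_false hall,
        decide_eq_false (show ¬ ∀ j ∈ σ u, evalAux true v fuel (u ++ [j]) = true from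
          fun hc => hall (fun j hj => hc j ((hσu j).mpr hj)))]
      rfl
  | false =>
    rw [if_neg (by simp)]
    by_cases hex : ∃ j, j < b u.length ∧ evalAux true v fuel (u ++ [j]) = true
    · rw [decide_eq_true hex]
      rcases hex with ⟨j, hj, hval⟩
      rw [decide_eq_false (show ¬ ∀ j' ∈ σ u, evalAux true v fuel (u ++ [j']) = false from
        fun hc => by rw [hc j ((hσu j).mpr hj)] at hval; exact Bool.false_ne_true hval)]
      rfl
    · rw [decide_eq_false hex]
      rw [decide_eq_true (show ∀ j' ∈ σ u, evalAux true v fuel (u ++ [j']) = false from by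
        intro j' hj'
        rw [Bool.eq_false_iff]
        intro hval
        exact hex ⟨j', (hσu j').mp hj', hval⟩)]
      rfl

lemma goNode_run {L : Type} {child : ℕ → (Bool → Alg L) → Alg L} {pc : ℕ → List L}
    {vc : ℕ → Bool} {isAnd : Bool} {v : L → Bool} :
    ∀ js : List ℕ,
    (∀ j ∈ js, ∀ k' : Bool → Alg L, (child j k').run v = pc j ++ (k' (vc j)).run v) →
    ∀ k : Bool → Alg L,
    (goNode child isAnd js k).run v = goProbe pc vc isAnd js ++ (k (goVal vc isAnd js)).run v := by
  intro js
  induction js with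
  | nil => intro _ k; simp [goNode, goProbe, goVal]
  | cons j js ih =>
    intro hchild k
    rw [goNode, goProbe, goVal, hchild j (List.mem_cons_self)]
    by_cases h : vc j == isAnd
    · rw [if_pos h, if_pos h, if_pos h,
        ih (fun j' hj' => hchild j' (List.mem_cons_of_mem _ hj')) k, List.append_assoc]
    · rw [if_neg h, if_neg h, if_neg h, List.append_nil]

lemma goNode_output {L : Type} {child : ℕ → (Bool → Alg L) → Alg L}
    {vc : ℕ → Bool} {isAnd : Bool} {v : L → Bool} :
    ∀ js : List ℕ,
    (∀ j ∈ js, ∀ k' : Bool → Alg L, (child j k').output v = (k' (vc j)).output v) →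
    ∀ k : Bool → Alg L,
    (goNode child isAnd js k).output v = (k (goVal vc isAnd js)).output v := by
  intro js
  induction js with
  | nil => intro _ k; simp [goNode, goVal]
  | cons j js ih =>
    intro hchild k
    rw [goNode, goVal, hchild j (List.mem_cons_self)]
    by_cases h : vc j == isAnd
    · rw [if_pos h, if_pos h, ih (fun j' hj' => hchild j' (List.mem_cons_of_mem _ hj')) k]
    · rw [if_neg h, if_neg h]

lemma evalA_run (hbp : ∀ i : Fin n, 0 < b i) {σ : List ℕ → List ℕ}
    (hσ : ∀ u j, j ∈ σ u ↔ j < b u.length) (v : Leaf n b → Bool) :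
    ∀ (fuel : ℕ) (u : List ℕ), Valid b u → u.length + fuel = n →
    ∀ k : Bool → Alg (Leaf n b),
    (evalA hbp σ fuel u k).run v
      = probeA hbp σ v fuel u ++ (k (evalAux true v fuel u)).run v := by
  intro fuel
  induction fuel with
  | zero =>
    intro u hu hlen k
    rw [evalA, probeA, evalAux_zero hbp hu (by omega) v]
    simp [Alg.run]
  | succ fuel ih =>
    intro u hu hlen k
    rw [evalA, probeA, ← goVal_eq_evalAux (hσ u) v fuel]
    exact goNode_run (σ u)
      (fun j hj k' => ih (u ++ [j]) (hu.append ((hσ u j).mp hj)) (by simp; omega) k') k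

lemma evalA_output (hbp : ∀ i : Fin n, 0 < b i) {σ : List ℕ → List ℕ}
    (hσ : ∀ u j, j ∈ σ u ↔ j < b u.length) (v : Leaf n b → Bool) :
    ∀ (fuel : ℕ) (u : List ℕ), Valid b u → u.length + fuel = n →
    ∀ k : Bool → Alg (Leaf n b),
    (evalA hbp σ fuel u k).output v = (k (evalAux true v fuel u)).output v := by
  intro fuel
  induction fuel with
  | zero =>
    intro u hu hlen k
    rw [evalA, evalAux_zero hbp hu (by omega) v]
    simp [Alg.output]
  | succ fuel ih =>
    intro u hu hlen k
    rw [evalA, ← goVal_eq_evalAux (hσ u) v fuel]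
    exact goNode_output (σ u)
      (fun j hj k' => ih (u ++ [j]) (hu.append ((hσ u j).mp hj)) (by simp; omega) k') k

end BDO
namespace BDO
open List

variable {n : ℕ} {b : ℕ → ℕ}

/-- full DFS enumeration of the leaves below `u`, children in order `σ` -/
def fullL (hbp : ∀ i : Fin n, 0 < b i) (σ : List ℕ → List ℕ) : ℕ → List ℕ → List (Leaf n b)
  | 0, u => [leafOf hbp u]
  | fuel+1, u => (σ u).flatMap (fun j => fullL hbp σ fuel (u ++ [j]))

lemma below_length {u : List ℕ} {l : Leaf n b} (h : Below u l) : u.length ≤ n := by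
  have := h.length_le
  rwa [toList_length] at this

lemma valid_of_below {u : List ℕ} {l : Leaf n b} (h : Below u l) : Valid b u := by
  intro i hi
  have hin : i < n := lt_of_lt_of_le hi (below_length h)
  have hg : u[i] = l.toList[i]'(by rw [toList_length]; exact hin) := h.getElem hi
  rw [hg]
  have := toList_get l ⟨i, hin⟩
  simp only at this
  rw [this]
  exact (l ⟨i, hin⟩).isLt

lemma mem_full_below (hbp : ∀ i : Fin n, 0 < b i) {σ : List ℕ → List ℕ}
    (hσ : ∀ u j, j ∈ σ u ↔ j < b u.length) :
    ∀ (fuel : ℕ) (u : List ℕ), Valid b u → u.length + fuel = n →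
      ∀ l ∈ fullL hbp σ fuel u, Below u l := by
  intro fuel
  induction fuel with
  | zero =>
    intro u hu hlen l hl
    rw [fullL, List.mem_singleton] at hl
    subst hl
    exact below_of_toList_eq (toList_leafOf hbp hu (by omega))
  | succ fuel ih =>
    intro u hu hlen l hl
    rw [fullL, List.mem_flatMap] at hl
    rcases hl with ⟨j, hj, hl⟩
    exact Below.of_append
      (ih (u ++ [j]) (hu.append ((hσ u j).mp hj)) (by simp; omega) l hl)

lemma full_nodup (hbp : ∀ i : Fin n, 0 < b i) {σ : List ℕ → List ℕ}
    (hσ : ∀ u j, j ∈ σ u ↔ j < b u.length) (hσn : ∀ u, (σ u).Nodup) :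
    ∀ (fuel : ℕ) (u : List ℕ), Valid b u → u.length + fuel = n →
      (fullL hbp σ fuel u).Nodup := by
  intro fuel
  induction fuel with
  | zero => intro u _ _; simp [fullL]
  | succ fuel ih =>
    intro u hu hlen
    rw [fullL, List.nodup_flatMap]
    constructor
    · intro j hj
      exact ih (u ++ [j]) (hu.append ((hσ u j).mp hj)) (by simp; omega)
    · refine List.Pairwise.imp_of_mem (fun {j j'} hj hj' hne => ?_) (hσn u)
      intro l hl hl'
      have h1 := mem_full_below hbp hσ fuel (u ++ [j])
        (hu.append ((hσ u j).mp hj)) (by simp; omega) l hl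
      have h2 := mem_full_below hbp hσ fuel (u ++ [j'])
        (hu.append ((hσ u j').mp hj')) (by simp; omega) l hl'
      exact hne (below_disj h1 h2)

lemma goProbe_sublist {L : Type} {pc : ℕ → List L} {fc : ℕ → List L}
    {vc : ℕ → Bool} {a : Bool} :
    ∀ js : List ℕ, (∀ j ∈ js, pc j <+ fc j) →
      goProbe pc vc a js <+ js.flatMap fc := by
  intro js
  induction js with
  | nil => intro _; simp [goProbe]
  | cons j js ih =>
    intro h
    rw [goProbe, List.flatMap_cons]
    apply List.Sublist.append (h j (List.mem_cons_self))
    by_cases hv : vc j == a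
    · rw [if_pos hv]
      exact ih (fun j' hj' => h j' (List.mem_cons_of_mem _ hj'))
    · rw [if_neg hv]
      exact List.nil_sublist _

lemma probe_sublist (hbp : ∀ i : Fin n, 0 < b i) (σ : List ℕ → List ℕ)
    (v : Leaf n b → Bool) :
    ∀ (fuel : ℕ) (u : List ℕ), probeA hbp σ v fuel u <+ fullL hbp σ fuel u := by
  intro fuel
  induction fuel with
  | zero => intro u; rw [probeA, fullL]
  | succ fuel ih =>
    intro u
    rw [probeA, fullL]
    exact goProbe_sublist (σ u) (fun j _ => ih (u ++ [j]))

lemma mem_probe_below (hbp : ∀ i : Fin n, 0 < b i) {σ : List ℕ → List ℕ}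
    (hσ : ∀ u j, j ∈ σ u ↔ j < b u.length) {fuel : ℕ} {u : List ℕ}
    (hu : Valid b u) (hlen : u.length + fuel = n) {v : Leaf n b → Bool}
    {l : Leaf n b} (hl : l ∈ probeA hbp σ v fuel u) : Below u l :=
  mem_full_below hbp hσ fuel u hu hlen l ((probe_sublist hbp σ v fuel u).mem hl)

lemma goVal_congr {L : Type} {pc : ℕ → List L} {vcw vcv : ℕ → Bool} {a : Bool}
    {w v : L → Bool} (hwv : True) :
    ∀ js : List ℕ,
      (∀ j ∈ js, (∀ l ∈ pc j, w l = v l) → vcw j = vcv j) →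
      (∀ l ∈ goProbe pc vcv a js, w l = v l) →
      goVal vcw a js = goVal vcv a js := by
  intro js
  induction js with
  | nil => intro _ _; rfl
  | cons j js ih =>
    intro hchild hagr
    rw [goProbe] at hagr
    have hj : vcw j = vcv j :=
      hchild j (List.mem_cons_self)
        (fun l hl => hagr l (List.mem_append_left _ hl))
    rw [goVal, goVal, hj]
    by_cases hv : vcv j == a
    · rw [if_pos hv, if_pos hv]
      apply ih (fun j' hj' => hchild j' (List.mem_cons_of_mem _ hj'))
      intro l hl
      exact hagr l (List.mem_append_right _ (by rwa [if_pos hv]))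
    · rw [if_neg hv, if_neg hv]

lemma probe_det (hbp : ∀ i : Fin n, 0 < b i) {σ : List ℕ → List ℕ}
    (hσ : ∀ u j, j ∈ σ u ↔ j < b u.length) (v : Leaf n b → Bool) :
    ∀ (fuel : ℕ) (u : List ℕ), Valid b u → u.length + fuel = n →
    ∀ w : Leaf n b → Bool, (∀ l ∈ probeA hbp σ v fuel u, w l = v l) →
    evalAux true w fuel u = evalAux true v fuel u := by
  intro fuel
  induction fuel with
  | zero =>
    intro u hu hlen w hw
    rw [evalAux_zero hbp hu (by omega) w, evalAux_zero hbp hu (by omega) v]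
    exact hw _ (by rw [probeA]; exact List.mem_singleton_self _)
  | succ fuel ih =>
    intro u hu hlen w hw
    rw [← goVal_eq_evalAux (hσ u) v fuel, ← goVal_eq_evalAux (hσ u) w fuel]
    apply goVal_congr trivial (σ u)
    · intro j hj hagr
      exact ih (u ++ [j]) (hu.append ((hσ u j).mp hj)) (by simp; omega) w hagr
    · rw [probeA] at hw
      exact hw

lemma goProbe_mem {L : Type} {pc : ℕ → List L} {vc : ℕ → Bool} {a : Bool} :
    ∀ js : List ℕ, ∀ l ∈ goProbe pc vc a js, ∃ j ∈ js, l ∈ pc j := by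
  intro js
  induction js with
  | nil => intro l hl; simp [goProbe] at hl
  | cons j js ih =>
    intro l hl
    rw [goProbe] at hl
    rcases List.mem_append.mp hl with h | h
    · exact ⟨j, List.mem_cons_self, h⟩
    · by_cases hv : vc j == a
      · rw [if_pos hv] at h
        rcases ih l h with ⟨j', hj', hl'⟩
        exact ⟨j', List.mem_cons_of_mem _ hj', hl'⟩
      · rw [if_neg hv] at h
        simp at h

/-- decomposition: the probe of an ancestor `w` of `u` either avoids the subtree of `u`
entirely, or contains the probe of `u` contiguously. -/
lemma probe_decomp (hbp : ∀ i : Fin n, 0 < b i) {σ : List ℕ → List ℕ}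
    (hσ : ∀ u j, j ∈ σ u ↔ j < b u.length) (hσn : ∀ u, (σ u).Nodup)
    (v : Leaf n b → Bool) :
    ∀ (fuel : ℕ) (w : List ℕ), Valid b w → w.length + fuel = n →
    ∀ u : List ℕ, w <+: u → u.length ≤ n →
    (∀ l ∈ probeA hbp σ v fuel w, ¬ Below u l) ∨
    ∃ p s, probeA hbp σ v fuel w = p ++ probeA hbp σ v (n - u.length) u ++ s ∧
      (∀ l ∈ p, ¬ Below u l) ∧ (∀ l ∈ s, ¬ Below u l) := by
  intro fuel
  induction fuel with
  | zero =>
    intro w hw hlen u hwu hun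
    have hle := hwu.length_le
    have heq : w = u := hwu.eq_of_length (by omega)
    subst heq
    right
    exact ⟨[], [], by simp [show n - w.length = 0 by omega], by simp, by simp⟩
  | succ fuel ih =>
    intro w hw hlen u hwu hun
    by_cases heqlen : u.length = w.length
    · have heq : w = u := hwu.eq_of_length heqlen.symm
      subst heq
      right
      exact ⟨[], [], by simp [show n - w.length = fuel + 1 by omega], by simp, by simp⟩
    · have hle := hwu.length_le
      have hlt : w.length < u.length := by omega
      obtain ⟨s₀, hs₀⟩ := hwu
      cases s₀ with
      | nil => exfalso; rw [← hs₀] at heqlen; simp at heqlen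
      | cons j₀ s₀' =>
        have hj₀pre : w ++ [j₀] <+: u := ⟨s₀', by rw [← hs₀]; simp⟩
        have hbelow_down : ∀ l : Leaf n b, Below u l → Below (w ++ [j₀]) l :=
          fun l hl => hj₀pre.trans hl
        rw [probeA]
        -- sub-induction over the list of children evaluated
        have main : ∀ js : List ℕ, js.Nodup → (∀ j ∈ js, j < b w.length) →
            (∀ l ∈ goProbe (fun j => probeA hbp σ v fuel (w ++ [j]))
                (fun j => evalAux true v fuel (w ++ [j])) (w.length % 2 == 0) js,
              ¬ Below u l) ∨
            ∃ p s, goProbe (fun j => probeA hbp σ v fuel (w ++ [j]))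
                (fun j => evalAux true v fuel (w ++ [j])) (w.length % 2 == 0) js
                = p ++ probeA hbp σ v (n - u.length) u ++ s ∧
              (∀ l ∈ p, ¬ Below u l) ∧ (∀ l ∈ s, ¬ Below u l) := by
          intro js
          induction js with
          | nil => intro _ _; left; intro l hl; simp [goProbe] at hl
          | cons j js ihjs =>
            intro hnd hjb
            have hndtail := hnd.of_cons
            have hjnotin : j ∉ js := (List.nodup_cons.mp hnd).1
            have hsegnot : ∀ j' , j' ∈ js ∨ j' = j → j' ≠ j₀ →
                ∀ l ∈ probeA hbp σ v fuel (w ++ [j']), ¬ Below u l := by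
              intro j' hj' hne l hl hbel
              have hj'b : j' < b w.length := by
                rcases hj' with h | h
                · exact hjb j' (List.mem_cons_of_mem _ h)
                · subst h; exact hjb j' (List.mem_cons_self)
              have h1 : Below (w ++ [j']) l :=
                mem_probe_below hbp hσ (hw.append hj'b) (by simp; omega) hl
              exact hne (below_disj h1 (hbelow_down l hbel))
            rw [goProbe]
            by_cases hjj₀ : j = j₀
            · subst hjj₀
              have hrec := ih (w ++ [j]) (hw.append (hjb j (List.mem_cons_self)))
                (by simp; omega) u hj₀pre hun
              have htailnot : ∀ l ∈ goProbe (fun j => probeA hbp σ v fuel (w ++ [j]))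
                  (fun j => evalAux true v fuel (w ++ [j])) (w.length % 2 == 0) js,
                  ¬ Below u l := by
                intro l h
                rcases goProbe_mem js l h with ⟨j', hj', hlj'⟩
                exact hsegnot j' (Or.inl hj') (fun he => hjnotin (he ▸ hj')) l hlj'
              by_cases hv : evalAux true v fuel (w ++ [j]) == (w.length % 2 == 0)
              · rw [if_pos hv]
                rcases hrec with hl | ⟨p', s', hdec, hp', hs'⟩
                · left
                  intro l hl'
                  rcases List.mem_append.mp hl' with h | h
                  · exact hl l h
                  · exact htailnot l h
                · right
                  refine ⟨p', s' ++ goProbe (fun j => probeA hbp σ v fuel (w ++ [j]))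
                      (fun j => evalAux true v fuel (w ++ [j])) (w.length % 2 == 0) js,
                    by rw [hdec]; simp, hp', ?_⟩
                  intro l hl'
                  rcases List.mem_append.mp hl' with h | h
                  · exact hs' l h
                  · exact htailnot l h
              · rw [if_neg hv]
                rcases hrec with hl | ⟨p', s', hdec, hp', hs'⟩
                · left
                  intro l hl'
                  rcases List.mem_append.mp hl' with h | h
                  · exact hl l h
                  · simp at h
                · right
                  exact ⟨p', s', by rw [hdec]; simp, hp', hs'⟩
            · -- a child not containing u
              have hseg : ∀ l ∈ probeA hbp σ v fuel (w ++ [j]), ¬ Below u l :=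
                hsegnot j (Or.inr rfl) hjj₀
              by_cases hv : evalAux true v fuel (w ++ [j]) == (w.length % 2 == 0)
              · rw [if_pos hv]
                rcases ihjs hndtail (fun j' hj' => hjb j' (List.mem_cons_of_mem _ hj'))
                  with hl | ⟨p', s', hdec, hp', hs'⟩
                · left
                  intro l hl'
                  rcases List.mem_append.mp hl' with h | h
                  · exact hseg l h
                  · exact hl l h
                · right
                  refine ⟨probeA hbp σ v fuel (w ++ [j]) ++ p', s', by rw [hdec]; simp, ?_, hs'⟩
                  intro l hl'
                  rcases List.mem_append.mp hl' with h | h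
                  · exact hseg l h
                  · exact hp' l h
              · rw [if_neg hv]
                left
                intro l hl'
                rcases List.mem_append.mp hl' with h | h
                · exact hseg l h
                · simp at h
        exact main (σ w) (hσn w) (fun j hj => (hσ w j).mp hj)

end BDO
namespace BDO
open List

variable {n : ℕ} {b : ℕ → ℕ}

lemma getD_of_below {u : List ℕ} {j : ℕ} {l : Leaf n b} (h : Below (u ++ [j]) l) :
    (Leaf.toList l).getD u.length 0 = j := by
  obtain ⟨s, hs⟩ := h
  rw [← hs, List.append_assoc, List.singleton_append, List.getD_eq_getElem?_getD,
    List.getElem?_append_right (le_refl u.length)]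
  simp

lemma run_congr {L : Type} :
    ∀ (A : Alg L) (v w : L → Bool), (∀ l ∈ A.run v, w l = v l) →
      A.run w = A.run v ∧ A.output w = A.output v := by
  intro A
  induction A with
  | result c => intro v w _; exact ⟨rfl, rfl⟩
  | query l next ih =>
    intro v w h
    have hl : w l = v l := h l (by rw [Alg.run]; exact List.mem_cons_self)
    have ht := ih (v l) v w (fun l' hl' => h l' (by rw [Alg.run]; exact List.mem_cons_of_mem _ hl'))
    constructor
    · rw [Alg.run, Alg.run, hl, ht.1]
    · rw [Alg.output, Alg.output, hl, ht.2]

/-- node `u` surely has value `t` under the distribution `d` -/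
def Surely (d : Leaf n b → ℝ) (t : Bool) (fuel : ℕ) (u : List ℕ) : Prop :=
  ∀ v : Leaf n b → Bool, Possible d v → evalAux true v fuel u = t

lemma exists_possible {d : Leaf n b → ℝ} (_hID : IsID d) : ∃ v, Possible d v := by
  refine ⟨fun l => decide (d l = 0), fun l => ⟨fun h => ?_, fun h => ?_⟩⟩
  · simp only [decide_eq_true_eq] at h
    rw [h]
    norm_num
  · simpa using h

lemma surely_needsAll {d : Leaf n b → ℝ} {t : Bool} {fuel : ℕ} {u : List ℕ}
    (hS : Surely d t (fuel+1) u) (hNA : (u.length % 2 == 0) = t) :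
    ∀ j, j < b u.length → Surely d t fuel (u ++ [j]) := by
  intro j hj v hv
  have h := hS v hv
  rw [evalAux, hNA] at h
  cases t with
  | true =>
    rw [if_pos (show (true == true) = true from rfl)] at h
    simp only [decide_eq_true_eq] at h
    exact h j hj
  | false =>
    rw [if_neg (by simp)] at h
    simp only [decide_eq_false_iff_not, not_exists] at h
    rw [Bool.eq_false_iff]
    intro he
    exact (h j) ⟨hj, he⟩

lemma surely_needsOne {d : Leaf n b → ℝ} {t : Bool} {fuel : ℕ} {u : List ℕ}
    (hID : IsID d) (hS : Surely d t (fuel+1) u) (hOr : (u.length % 2 == 0) = !t) :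
    ∃ j, j < b u.length ∧ Surely d t fuel (u ++ [j]) := by
  by_contra hne
  push_neg at hne
  obtain ⟨v₀, hv₀⟩ := exists_possible hID
  have hne' : ∀ j, ∃ v, Possible d v ∧
      (j < b u.length → evalAux true v fuel (u ++ [j]) = !t) := by
    intro j
    by_cases hj : j < b u.length
    · have hns := hne j hj
      rw [Surely] at hns
      push_neg at hns
      obtain ⟨v, hv1, hv2⟩ := hns
      exact ⟨v, hv1, fun _ => bool_ne hv2⟩
    · exact ⟨v₀, hv₀, fun h => absurd h hj⟩
  choose vf hvf1 hvf2 using hne'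
  have hWposs : Possible d
      (fun l => if Below u l then vf ((Leaf.toList l).getD u.length 0) l else v₀ l) := by
    intro l
    by_cases hbel : Below u l
    · simp only [if_pos hbel]
      exact hvf1 _ l
    · simp only [if_neg hbel]
      exact hv₀ l
  have hWchild : ∀ j, j < b u.length →
      evalAux true (fun l => if Below u l then vf ((Leaf.toList l).getD u.length 0) l else v₀ l)
        fuel (u ++ [j]) = !t := by
    intro j hj
    rw [← hvf2 j hj]
    apply evalAux_congr
    intro l hl
    rw [if_pos (Below.of_append hl), getD_of_below hl]
  have h := hS _ hWposs
  rw [evalAux, hOr] at h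
  cases t with
  | true =>
    rw [if_neg (by simp)] at h
    simp only [decide_eq_true_eq] at h
    rcases h with ⟨j, hj, hval⟩
    rw [hWchild j hj] at hval
    simp at hval
  | false =>
    rw [if_pos (show ((!false) == true) = true from rfl)] at h
    simp only [decide_eq_false_iff_not, not_forall] at h
    rcases h with ⟨j, hj, hval⟩
    rw [hWchild j hj] at hval
    simp at hval

open Classical in
/-- the child ordering: put a surely-`t` child first when one exists -/
noncomputable def sigma (n : ℕ) (b : ℕ → ℕ) (d : Leaf n b → ℝ) (t : Bool)
    (u : List ℕ) : List ℕ :=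
  if h : ∃ j, j < b u.length ∧ Surely d t (n - (u.length + 1)) (u ++ [j])
  then h.choose :: ((List.range (b u.length)).filter (fun j => j ≠ h.choose))
  else List.range (b u.length)

lemma sigma_mem (d : Leaf n b → ℝ) (t : Bool) (u : List ℕ) (j : ℕ) :
    j ∈ sigma n b d t u ↔ j < b u.length := by
  rw [sigma]
  split
  · next h =>
    simp only [List.mem_cons, List.mem_filter, List.mem_range, decide_eq_true_eq]
    constructor
    · rintro (rfl | ⟨hj, _⟩)
      · exact h.choose_spec.1
      · exact hj
    · intro hj
      by_cases he : j = h.choose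
      · exact Or.inl he
      · exact Or.inr ⟨hj, by simpa using he⟩
  · exact List.mem_range

lemma sigma_nodup (d : Leaf n b → ℝ) (t : Bool) (u : List ℕ) :
    (sigma n b d t u).Nodup := by
  rw [sigma]
  split
  · next h =>
    apply List.Nodup.cons
    · intro hmem
      rw [List.mem_filter] at hmem
      simpa using hmem.2
    · exact List.nodup_range.filter _
  · exact List.nodup_range

lemma sigma_length (d : Leaf n b → ℝ) (t : Bool) (u : List ℕ) :
    (sigma n b d t u).length = b u.length := by
  have hperm : sigma n b d t u ~ List.range (b u.length) := by
    rw [List.perm_ext_iff_of_nodup (sigma_nodup d t u) List.nodup_range]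
    intro j
    rw [sigma_mem, List.mem_range]
  rw [hperm.length_eq, List.length_range]

lemma sigma_surely_head {d : Leaf n b → ℝ} {t : Bool} {u : List ℕ}
    (h : ∃ j, j < b u.length ∧ Surely d t (n - (u.length + 1)) (u ++ [j])) :
    ∃ j₀ rest, sigma n b d t u = j₀ :: rest ∧ j₀ < b u.length ∧
      Surely d t (n - (u.length + 1)) (u ++ [j₀]) := by
  rw [sigma, dif_pos h]
  exact ⟨h.choose, _, rfl, h.choose_spec.1, h.choose_spec.2⟩

lemma goProbe_all {L : Type} {pc : ℕ → List L} {vc : ℕ → Bool} {a : Bool} :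
    ∀ js : List ℕ, (∀ j ∈ js, vc j = a) → goProbe pc vc a js = js.flatMap pc := by
  intro js
  induction js with
  | nil => intro _; simp [goProbe]
  | cons j js ih =>
    intro h
    rw [goProbe, if_pos (by simp [h j (List.mem_cons_self)]),
      ih (fun j' hj' => h j' (List.mem_cons_of_mem _ hj')), List.flatMap_cons]

/-- on possible assignments, the solver queries exactly a minimum certificate -/
lemma probe_len (hbp : ∀ i : Fin n, 0 < b i) {d : Leaf n b → ℝ} (hID : IsID d) (t : Bool) :
    ∀ (fuel : ℕ) (u : List ℕ), Valid b u → u.length + fuel = n →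
    Surely d t fuel u →
    ∀ v : Leaf n b → Bool, Possible d v →
      (probeA hbp (sigma n b d t) v fuel u).length = cSize b t fuel u.length := by
  intro fuel
  induction fuel with
  | zero => intro u _ _ _ v _; rw [probeA, cSize]; rfl
  | succ fuel ih =>
    intro u hu hlen hS v hv
    have hfuel : n - (u.length + 1) = fuel := by omega
    by_cases hNA : (u.length % 2 == 0) = t
    · -- all children are evaluated
      have hall : ∀ j ∈ sigma n b d t u,
          evalAux true v fuel (u ++ [j]) = ((u.length % 2 == 0) : Bool) := by
        intro j hj
        rw [hNA]
        exact surely_needsAll hS hNA j ((sigma_mem d t u j).mp hj) v hv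
      rw [probeA, goProbe_all _ hall, cSize, if_pos (by simp [hNA])]
      rw [List.length_flatMap]
      have hmap : (sigma n b d t u).map
            (fun j => (probeA hbp (sigma n b d t) v fuel (u ++ [j])).length)
          = (sigma n b d t u).map (fun _ => cSize b t fuel (u.length + 1)) := by
        apply List.map_congr_left
        intro j hj
        have hjb := (sigma_mem d t u j).mp hj
        have := ih (u ++ [j]) (hu.append hjb) (by simp; omega)
          (surely_needsAll hS hNA j hjb) v hv
        simpa using this
      rw [hmap, List.map_const', List.sum_replicate, smul_eq_mul, sigma_length]
    · -- only the surely-t child is evaluated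
      have hOr : (u.length % 2 == 0) = !t := by
        cases h : (u.length % 2 == 0) <;> cases t <;> simp_all
      have hex := surely_needsOne hID hS hOr
      rw [← hfuel] at hex
      obtain ⟨j₀, rest, hσu, hj₀b, hj₀S⟩ := sigma_surely_head hex
      rw [probeA, hσu, goProbe]
      have hval : evalAux true v fuel (u ++ [j₀]) = t := by
        have := hj₀S v hv
        rwa [hfuel] at this
      rw [if_neg (by rw [hval, hOr]; cases t <;> simp)]
      rw [List.append_nil, cSize, if_neg (by simp [hNA])]
      have := ih (u ++ [j₀]) (hu.append hj₀b) (by simp; omega)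
        (by rw [← hfuel]; exact hj₀S) v hv
      simpa using this

/-- every leaf below `u` occurs in the full enumeration -/
lemma full_cover (hbp : ∀ i : Fin n, 0 < b i) {σ : List ℕ → List ℕ}
    (hσ : ∀ u j, j ∈ σ u ↔ j < b u.length) :
    ∀ (fuel : ℕ) (u : List ℕ), Valid b u → u.length + fuel = n →
    ∀ l : Leaf n b, Below u l → l ∈ fullL hbp σ fuel u := by
  intro fuel
  induction fuel with
  | zero =>
    intro u hu hlen l hl
    have heq : u = l.toList := hl.eq_of_length (by rw [toList_length]; omega)
    rw [fullL, List.mem_singleton]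
    exact eq_leafOf_of_toList_eq hbp hu (by omega) heq.symm
  | succ fuel ih =>
    intro u hu hlen l hl
    obtain ⟨s, hs⟩ := hl
    cases s with
    | nil =>
      exfalso
      have := congrArg List.length hs
      rw [toList_length] at this
      simp at this
      omega
    | cons j s' =>
      have hpre : u ++ [j] <+: l.toList := ⟨s', by rw [← hs]; simp⟩
      have hjb : j < b u.length := by
        have hval := valid_of_below (l := l) hpre
        have := hval u.length (by simp)
        simpa using this
      rw [fullL, List.mem_flatMap]
      exact ⟨j, (hσ u j).mpr hjb,
        ih (u ++ [j]) (hu.append hjb) (by simp; omega) l hpre⟩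

end BDO
/-- For a balanced AND-OR tree (height `n ≥ 1`, every internal node at
depth `i` has `b i ≥ 2` children) and an independent distribution `d` under which the
probability of the root having value 0 is either 0 or 1, some depth-first directional
algorithm `B₀` attains the minimum cost over all algorithms against `d`. -/
theorem balanced_degenerate_root_depth_first_optimal (n : ℕ) (hn : 1 ≤ n) (b : ℕ → ℕ)
    (hb : ∀ i, i < n → 2 ≤ b i)
    (d : Leaf n b → ℝ) (hID : IsID d)
    (hroot : rootZeroProb true n b d = 0 ∨ rootZeroProb true n b d = 1) :
    ∃ B₀ : Alg (Leaf n b), IsAlg true n b B₀ ∧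
      DepthFirst true n b B₀ ∧ Directional B₀ ∧
      cost B₀ d = minCost true n b d := by
  classical
  have hbp : ∀ i : Fin n, 0 < b i := fun i => by have := hb i i.isLt; omega
  obtain ⟨t, Hpos⟩ := BDO.root_const hID hroot
  have hσ : ∀ u j, j ∈ BDO.sigma n b d t u ↔ j < b u.length := BDO.sigma_mem d t
  have hσn : ∀ u, (BDO.sigma n b d t u).Nodup := BDO.sigma_nodup d t
  have hvalidnil : BDO.Valid b [] := by intro i hi; simp at hi
  have hlennil : ([] : List ℕ).length + n = n := by simp
  have hrun : ∀ v, (BDO.evalA hbp (BDO.sigma n b d t) n [] Alg.result).run v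
      = BDO.probeA hbp (BDO.sigma n b d t) v n [] := by
    intro v
    rw [BDO.evalA_run hbp hσ v n [] hvalidnil hlennil Alg.result]
    simp [Alg.run]
  have hrootval : ∀ v : Leaf n b → Bool, rootVal true n b v = evalAux true v n [] := by
    intro v
    rw [rootVal, nodeVal]
    norm_num
  have hIsAlg : IsAlg true n b (BDO.evalA hbp (BDO.sigma n b d t) n [] Alg.result) := by
    constructor
    · intro v
      rw [hrun]
      exact (BDO.probe_sublist hbp _ v n []).nodup
        (BDO.full_nodup hbp hσ hσn n [] hvalidnil hlennil)
    · intro v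
      rw [BDO.evalA_output hbp hσ v n [] hvalidnil hlennil Alg.result, hrootval]
      rfl
  have hSroot : BDO.Surely d t n [] := by
    intro v hv
    rw [← hrootval]
    exact Hpos v hv
  have hprobelen : ∀ v : Leaf n b → Bool, BDO.Possible d v →
      ((BDO.evalA hbp (BDO.sigma n b d t) n [] Alg.result).run v).length
        = BDO.cSize b t n 0 := by
    intro v hv
    rw [hrun]
    have := BDO.probe_len hbp hID t n [] hvalidnil hlennil hSroot v hv
    simpa using this
  have hcost : cost (BDO.evalA hbp (BDO.sigma n b d t) n [] Alg.result) d
      = (BDO.cSize b t n 0 : ℝ) := by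
    rw [cost]
    have hterm : ∀ v ∈ (Finset.univ : Finset (Leaf n b → Bool)),
        assgProb d v * (((BDO.evalA hbp (BDO.sigma n b d t) n [] Alg.result).run v).length : ℝ)
          = assgProb d v * (BDO.cSize b t n 0 : ℝ) := by
      intro v _
      by_cases hz : assgProb d v = 0
      · rw [hz, zero_mul, zero_mul]
      · rw [hprobelen v (BDO.possible_of_ne_zero hz)]
    rw [Finset.sum_congr rfl hterm, ← Finset.sum_mul, BDO.sum_assgProb, one_mul]
  have hlower : ∀ c ∈ {c : ℝ | ∃ A : Alg (Leaf n b), IsAlg true n b A ∧ c = cost A d},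
      (BDO.cSize b t n 0 : ℝ) ≤ c := by
    rintro c ⟨A, hA, rfl⟩
    rw [cost]
    have hterm : ∀ v ∈ (Finset.univ : Finset (Leaf n b → Bool)),
        assgProb d v * (BDO.cSize b t n 0 : ℝ)
          ≤ assgProb d v * ((A.run v).length : ℝ) := by
      intro v _
      by_cases hz : assgProb d v = 0
      · rw [hz, zero_mul, zero_mul]
      · have hposs := BDO.possible_of_ne_zero hz
        have hrt : rootVal true n b v = t := Hpos v hposs
        have hdet : ∀ w : Leaf n b → Bool, (∀ l ∈ A.run v, w l = v l) →
            evalAux true w n [] = t := by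
          intro w hw
          have h1 := (BDO.run_congr A v w hw).2
          rw [hA.2 w, hA.2 v] at h1
          rw [← hrootval w, h1, hrt]
        have hcount := BDO.det_count hbp t v n [] (A.run v) hvalidnil hlennil hdet
        have hlen2 : BDO.cSize b t n 0 ≤ (A.run v).length :=
          le_trans (by simpa using hcount) List.countP_le_length
        apply mul_le_mul_of_nonneg_left _ (BDO.assgProb_nonneg hID v)
        exact_mod_cast hlen2
    calc (BDO.cSize b t n 0 : ℝ)
        = ∑ v : Leaf n b → Bool, assgProb d v * (BDO.cSize b t n 0 : ℝ) := by
          rw [← Finset.sum_mul, BDO.sum_assgProb, one_mul]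
      _ ≤ _ := Finset.sum_le_sum hterm
  have hmem : cost (BDO.evalA hbp (BDO.sigma n b d t) n [] Alg.result) d
      ∈ {c : ℝ | ∃ A : Alg (Leaf n b), IsAlg true n b A ∧ c = cost A d} :=
    ⟨_, hIsAlg, rfl⟩
  refine ⟨BDO.evalA hbp (BDO.sigma n b d t) n [] Alg.result, hIsAlg, ?_, ?_, ?_⟩
  · -- depth-first
    intro v u hulen i j hij hj hbel hnotbel
    have hvalid_u : BDO.Valid b u := BDO.valid_of_below hbel
    rcases BDO.probe_decomp hbp hσ hσn v n [] hvalidnil hlennil u (List.nil_prefix)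
        (le_of_lt hulen) with hnone | ⟨p, s, hdec, hp, hs⟩
    · exfalso
      have hmemi : (BDO.evalA hbp (BDO.sigma n b d t) n [] Alg.result).run v
          = BDO.probeA hbp (BDO.sigma n b d t) v n [] := hrun v
      have hmm : ((BDO.evalA hbp (BDO.sigma n b d t) n [] Alg.result).run v)[i]'(hij.trans hj)
          ∈ (BDO.evalA hbp (BDO.sigma n b d t) n [] Alg.result).run v := List.getElem_mem _
      exact hnone _ (by rw [← hmemi]; exact hmm) hbel
    · have hrun' : (BDO.evalA hbp (BDO.sigma n b d t) n [] Alg.result).run v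
          = p ++ BDO.probeA hbp (BDO.sigma n b d t) v (n - u.length) u ++ s := by
        rw [hrun v, hdec]
      have hplen : p.length ≤ i := by
        by_contra hlt
        push_neg at hlt
        have hgi := List.getElem_of_eq hrun' (hij.trans hj)
        rw [List.getElem_append_left (by
          rw [List.length_append]
          omega)] at hgi
        rw [List.getElem_append_left hlt] at hgi
        exact hp _ (List.getElem_mem _) (hgi ▸ hbel)
      have hlenP : p.length + (BDO.probeA hbp (BDO.sigma n b d t) v (n - u.length) u).length
          ≤ j := by
        by_contra hlt
        push_neg at hlt
        have hgj := List.getElem_of_eq hrun' hj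
        rw [List.getElem_append_left (by
          rw [List.length_append]
          omega)] at hgj
        rw [List.getElem_append_right (by omega)] at hgj
        apply hnotbel
        rw [hgj]
        exact BDO.mem_probe_below hbp hσ hvalid_u (by omega) (List.getElem_mem _)
      refine ⟨evalAux true v (n - u.length) u, ?_⟩
      intro w hw
      have hPsub : ∀ l ∈ BDO.probeA hbp (BDO.sigma n b d t) v (n - u.length) u,
          l ∈ ((BDO.evalA hbp (BDO.sigma n b d t) n [] Alg.result).run v).take j := by
        intro l hl
        rw [hrun', List.take_append,
          List.take_of_length_le (by rw [List.length_append]; omega)]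
        exact List.mem_append_left _ (List.mem_append_right _ hl)
      have hagree : ∀ l ∈ BDO.probeA hbp (BDO.sigma n b d t) v (n - u.length) u, w l = v l :=
        fun l hl => hw l (hPsub l hl)
      exact BDO.probe_det hbp hσ v (n - u.length) u hvalid_u (by omega) w hagree
  · -- directional
    refine ⟨fun l => (BDO.fullL hbp (BDO.sigma n b d t) n []).idxOf l, ?_, ?_⟩
    · intro l l' h
      have hm : l ∈ BDO.fullL hbp (BDO.sigma n b d t) n [] :=
        BDO.full_cover hbp hσ n [] hvalidnil hlennil l (List.nil_prefix)
      have hm' : l' ∈ BDO.fullL hbp (BDO.sigma n b d t) n [] :=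
        BDO.full_cover hbp hσ n [] hvalidnil hlennil l' (List.nil_prefix)
      have h1 := List.getElem_idxOf (List.idxOf_lt_length_iff.mpr hm)
      have h2 := List.getElem_idxOf (List.idxOf_lt_length_iff.mpr hm')
      rw [← h1, ← h2]
      simp only [h]
    · intro v
      have hsortedfull : ((BDO.fullL hbp (BDO.sigma n b d t) n []).map
          (fun l => (BDO.fullL hbp (BDO.sigma n b d t) n []).idxOf l)).Pairwise (· < ·) := by
        rw [List.pairwise_iff_getElem]
        intro i j hi hj hij
        rw [List.getElem_map, List.getElem_map,
          List.Nodup.idxOf_getElem (BDO.full_nodup hbp hσ hσn n [] hvalidnil hlennil),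
          List.Nodup.idxOf_getElem (BDO.full_nodup hbp hσ hσn n [] hvalidnil hlennil)]
        exact hij
      refine List.Pairwise.sublist ?_ hsortedfull
      apply List.Sublist.map
      rw [hrun]
      exact BDO.probe_sublist hbp _ v n []
  · -- optimal cost
    rw [minCost]
    rw [hcost]
    apply le_antisymm
    · exact le_csInf ⟨_, hmem⟩ hlower
    · rw [← hcost]
      exact csInf_le ⟨(BDO.cSize b t n 0 : ℝ), hlower⟩ hmem
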